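/- Let H = (V, E) be a linear k-uniform hypergraph, let d_H = max over subhypergraphs J of H of the minimum degree δ(J), and let D_H = min{k·d_H, Δ(H)}. Let 0 ≤ ℓ ≤ max{k, d_H} and let W = (w_1, …, w_ℓ) be a sequence of distinct vertices of H. Then there exists a D_H-degenerate ordering w_1, …, w_ℓ, v_{ℓ+1}, …, v_{|V|} of V that begins with W. -/

import Mathlib

open scoped Classical

def degOn {m : ℕ} (E : Finset (Finset (Fin m))) (U : Finset (Fin m)) (v : Fin m) : ℕ :=
  (E.filter (fun e => v ∈ e ∧ e ⊆ U)).card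

/-- `d_H`: maximum over (induced) subhypergraphs of the minimum degree. -/
def dH {m : ℕ} (E : Finset (Finset (Fin m))) : ℕ :=
  (Finset.univ : Finset (Fin m)).powerset.sup
    (fun U => if h : U.Nonempty then U.inf' h (degOn E U) else 0)

def maxDeg {m : ℕ} (E : Finset (Finset (Fin m))) : ℕ :=
  Finset.univ.sup (fun v => (E.filter (fun e => v ∈ e)).card)

def DH (k : ℕ) {m : ℕ} (E : Finset (Finset (Fin m))) : ℕ :=
  min (k * dH E) (maxDeg E)

section Aux

variable {m : ℕ}

lemma degOn_le_maxDeg (E : Finset (Finset (Fin m))) (U : Finset (Fin m)) (v : Fin m) :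
    degOn E U v ≤ maxDeg E := by
  refine le_trans (Finset.card_le_card ?_)
    (Finset.le_sup (f := fun v => (E.filter (fun e => v ∈ e)).card) (Finset.mem_univ v))
  intro e he
  simp only [Finset.mem_filter] at he ⊢
  exact ⟨he.1, he.2.1⟩

lemma exists_low_deg (E : Finset (Finset (Fin m))) (U : Finset (Fin m)) (hU : U.Nonempty) :
    ∃ v ∈ U, degOn E U v ≤ dH E := by
  obtain ⟨v, hv, hveq⟩ := Finset.exists_mem_eq_inf' hU (degOn E U)
  refine ⟨v, hv, ?_⟩
  rw [← hveq]
  have h := Finset.le_sup (f := fun U : Finset (Fin m) =>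
      if h : U.Nonempty then U.inf' h (degOn E U) else 0)
    (Finset.mem_powerset.mpr (Finset.subset_univ U))
  simp only [dif_pos hU] at h
  exact h

lemma one_le_dH {E : Finset (Finset (Fin m))} {e : Finset (Fin m)} (he : e ∈ E)
    (hne : e.Nonempty) : 1 ≤ dH E := by
  have h := Finset.le_sup (f := fun U : Finset (Fin m) =>
      if h : U.Nonempty then U.inf' h (degOn E U) else 0)
    (Finset.mem_powerset.mpr (Finset.subset_univ e))
  simp only [dif_pos hne] at h
  refine le_trans ?_ h
  apply Finset.le_inf'
  intro v hv
  have : e ∈ E.filter (fun f => v ∈ f ∧ f ⊆ e) := by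
    simp [he, hv]
  exact Finset.card_pos.mpr ⟨e, this⟩

lemma through_count {k : ℕ} {E : Finset (Finset (Fin m))}
    (hunif : ∀ e ∈ E, e.card = k)
    (hlin : ∀ e ∈ E, ∀ f ∈ E, e ≠ f → (e ∩ f).card ≤ 1)
    (S : Finset (Fin m)) (v : Fin m) :
    degOn E S v * (k - 1) ≤ (S.erase v).card := by
  classical
  set F := E.filter (fun e => v ∈ e ∧ e ⊆ S) with hF
  have hdisj : ∀ e ∈ F, ∀ f ∈ F, e ≠ f → Disjoint (e.erase v) (f.erase v) := by
    intro e he f hf hef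
    simp only [hF, Finset.mem_filter] at he hf
    have h1 : (e ∩ f).card ≤ 1 := hlin e he.1 f hf.1 hef
    have h2 : v ∈ e ∩ f := Finset.mem_inter.mpr ⟨he.2.1, hf.2.1⟩
    have h3 : e ∩ f = {v} := by
      apply Finset.eq_of_superset_of_card_ge (Finset.singleton_subset_iff.mpr h2)
      simpa using h1
    rw [Finset.disjoint_left]
    intro x hx hx'
    have : x ∈ e ∩ f := Finset.mem_inter.mpr ⟨Finset.mem_of_mem_erase hx, Finset.mem_of_mem_erase hx'⟩
    rw [h3, Finset.mem_singleton] at this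
    exact (Finset.ne_of_mem_erase hx) this
  have hcard : (F.biUnion (fun e => e.erase v)).card = ∑ e ∈ F, (e.erase v).card :=
    Finset.card_biUnion hdisj
  have hsub : F.biUnion (fun e => e.erase v) ⊆ S.erase v := by
    intro x hx
    simp only [Finset.mem_biUnion] at hx
    obtain ⟨e, he, hx⟩ := hx
    simp only [hF, Finset.mem_filter] at he
    exact Finset.mem_erase.mpr ⟨Finset.ne_of_mem_erase hx, he.2.2 (Finset.mem_of_mem_erase hx)⟩
  have hsumeq : ∑ e ∈ F, (e.erase v).card = F.card * (k - 1) := by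
    rw [Finset.sum_congr rfl (fun e he => ?_), Finset.sum_const, smul_eq_mul]
    simp only [hF, Finset.mem_filter] at he
    rw [Finset.card_erase_of_mem he.2.1, hunif e he.1]
  calc degOn E S v * (k-1) = ∑ e ∈ F, (e.erase v).card := hsumeq.symm
    _ = (F.biUnion (fun e => e.erase v)).card := hcard.symm
    _ ≤ (S.erase v).card := Finset.card_le_card hsub

-- double counting: sum of degrees = k * number of edges inside U

lemma sum_degOn {k : ℕ} {E : Finset (Finset (Fin m))}
    (hunif : ∀ e ∈ E, e.card = k) (U : Finset (Fin m)) :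
    ∑ v ∈ U, degOn E U v = k * (E.filter (fun e => e ⊆ U)).card := by
  classical
  have : ∀ v ∈ U, degOn E U v = ∑ e ∈ E.filter (fun e => e ⊆ U), if v ∈ e then 1 else 0 := by
    intro v hv
    rw [← Finset.card_filter]
    unfold degOn
    congr 1
    rw [Finset.filter_filter]
    apply Finset.filter_congr
    intro e he
    tauto
  rw [Finset.sum_congr rfl this, Finset.sum_comm]
  rw [Finset.sum_congr rfl (g := fun e => k) ?_, Finset.sum_const, smul_eq_mul, mul_comm]
  intro e he
  simp only [Finset.mem_filter] at he
  rw [← Finset.card_filter]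
  have : U.filter (fun v => v ∈ e) = e := by
    rw [Finset.filter_mem_eq_inter, Finset.inter_comm]
    exact Finset.inter_eq_left.mpr he.2
  rw [this, hunif e he.1]

lemma edges_split (E : Finset (Finset (Fin m))) (U : Finset (Fin m)) (v : Fin m) (hv : v ∈ U) :
    (E.filter (fun e => e ⊆ U)).card
      = degOn E U v + (E.filter (fun e => e ⊆ U.erase v)).card := by
  classical
  have key := Finset.card_filter_add_card_filter_not
    (s := E.filter (fun e => e ⊆ U)) (p := fun e => v ∈ e)
  rw [Finset.filter_filter, Finset.filter_filter] at key
  have h1 : E.filter (fun e => e ⊆ U ∧ v ∈ e) = E.filter (fun e => v ∈ e ∧ e ⊆ U) := by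
    apply Finset.filter_congr; intro e _; tauto
  have h2 : E.filter (fun e => e ⊆ U ∧ ¬ v ∈ e) = E.filter (fun e => e ⊆ U.erase v) := by
    apply Finset.filter_congr; intro e _
    constructor
    · rintro ⟨hsub, hne⟩ x hx
      exact Finset.mem_erase.mpr ⟨fun h => hne (h ▸ hx), hsub hx⟩
    · intro h
      exact ⟨h.trans (Finset.erase_subset _ _), fun hve => (Finset.mem_erase.mp (h hve)).1 rfl⟩
  rw [h1, h2] at key
  unfold degOn
  omega

lemma edges_card_le (k : ℕ) (hk : 1 ≤ k) (E : Finset (Finset (Fin m))) (hunif : ∀ e ∈ E, e.card = k)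
    (U : Finset (Fin m)) :
    (E.filter (fun e => e ⊆ U)).card ≤ dH E * (U.card + 1 - k) := by
  classical
  induction U using Finset.strongInduction with
  | _ U ih =>
    rcases Finset.eq_empty_or_nonempty (E.filter (fun e => e ⊆ U)) with hE' | hE'
    · simp [hE']
    · obtain ⟨e0, he0⟩ := hE'
      simp only [Finset.mem_filter] at he0
      have hkU : k ≤ U.card := by
        rw [← hunif e0 he0.1]; exact Finset.card_le_card he0.2
      have hUne : U.Nonempty := Finset.card_pos.mp (by omega)
      obtain ⟨v, hv, hdeg⟩ := exists_low_deg E U hUne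
      have hsplit := edges_split E U v hv
      have hih := ih (U.erase v) (Finset.erase_ssubset hv)
      rw [Finset.card_erase_of_mem hv] at hih
      have hih' : (E.filter (fun e => e ⊆ U.erase v)).card ≤ dH E * (U.card - k) :=
        hih.trans (le_of_eq (by congr 1; omega))
      have h2 : U.card + 1 - k = (U.card - k) + 1 := by omega
      rw [hsplit, h2, Nat.mul_succ]
      omega

lemma degOn_le_sdiff_add {E : Finset (Finset (Fin m))}
    (hlin : ∀ e ∈ E, ∀ f ∈ E, e ≠ f → (e ∩ f).card ≤ 1)
    (U R : Finset (Fin m)) (v : Fin m) (hvR : v ∉ R) :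
    degOn E U v ≤ degOn E (U \ R) v + R.card := by
  classical
  set F2 := E.filter (fun e => v ∈ e ∧ e ⊆ U ∧ (e ∩ R).Nonempty) with hF2
  have hsub : E.filter (fun e => v ∈ e ∧ e ⊆ U)
      ⊆ E.filter (fun e => v ∈ e ∧ e ⊆ U \ R) ∪ F2 := by
    intro e he
    simp only [Finset.mem_filter] at he
    rcases Finset.eq_empty_or_nonempty (e ∩ R) with hER | hER
    · apply Finset.mem_union_left
      simp only [Finset.mem_filter]
      refine ⟨he.1, he.2.1, fun x hx => Finset.mem_sdiff.mpr ⟨he.2.2 hx, fun hxR => ?_⟩⟩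
      exact Finset.notMem_empty x (hER ▸ Finset.mem_inter.mpr ⟨hx, hxR⟩)
    · exact Finset.mem_union_right _ (by simp only [hF2, Finset.mem_filter]; tauto)
  have hF2card : F2.card ≤ R.card := by
    apply Finset.card_le_card_of_injOn
      (fun e => if h : (e ∩ R).Nonempty then (e ∩ R).min' h else v)
    · intro e he
      simp only [hF2, Finset.mem_coe, Finset.mem_filter] at he
      show (if h : (e ∩ R).Nonempty then (e ∩ R).min' h else v) ∈ (R : Set (Fin m))
      rw [dif_pos he.2.2.2]
      exact (Finset.mem_inter.mp ((e ∩ R).min'_mem he.2.2.2)).2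
    · intro e he f hf hef
      simp only [Finset.coe_filter, Set.mem_setOf_eq, hF2] at he hf
      by_contra hne
      have h1 : (e ∩ f).card ≤ 1 := hlin e he.1 f hf.1 hne
      simp only [dif_pos he.2.2.2, dif_pos hf.2.2.2] at hef
      set w := (e ∩ R).min' he.2.2.2 with hw
      have hwe : w ∈ e ∩ R := (e ∩ R).min'_mem he.2.2.2
      have hwf : w ∈ f ∩ R := hef ▸ (f ∩ R).min'_mem hf.2.2.2
      have hvw : v ≠ w := fun h => hvR (h ▸ (Finset.mem_inter.mp hwe).2)
      have : ({v, w} : Finset (Fin m)) ⊆ e ∩ f := by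
        intro x hx
        rcases Finset.mem_insert.mp hx with rfl | hx
        · exact Finset.mem_inter.mpr ⟨he.2.1, hf.2.1⟩
        · rw [Finset.mem_singleton] at hx
          subst hx
          exact Finset.mem_inter.mpr ⟨(Finset.mem_inter.mp hwe).1, (Finset.mem_inter.mp hwf).1⟩
      have := Finset.card_le_card this
      rw [Finset.card_pair hvw] at this
      omega
  calc degOn E U v ≤ (E.filter (fun e => v ∈ e ∧ e ⊆ U \ R) ∪ F2).card :=
        Finset.card_le_card hsub
    _ ≤ degOn E (U \ R) v + F2.card := Finset.card_union_le _ _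
    _ ≤ degOn E (U \ R) v + R.card := by omega

lemma prefix_bound {k : ℕ} {E : Finset (Finset (Fin m))} (hk : 2 ≤ k) (hunif : ∀ e ∈ E, e.card = k)
    (hlin : ∀ e ∈ E, ∀ f ∈ E, e ≠ f → (e ∩ f).card ≤ 1)
    (S : Finset (Fin m)) (v : Fin m) (hS : S.card ≤ max k (dH E)) :
    degOn E S v ≤ k * dH E := by
  rcases Nat.eq_zero_or_pos (degOn E S v) with h0 | h0
  · omega
  · obtain ⟨e, he⟩ := Finset.card_pos.mp h0
    simp only [Finset.mem_filter] at he
    have hd : 1 ≤ dH E := one_le_dH he.1 (Finset.card_pos.mp (by rw [hunif e he.1]; omega))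
    have hvS : v ∈ S := he.2.2 he.2.1
    have hcount := through_count hunif hlin S v
    rw [Finset.card_erase_of_mem hvS] at hcount
    rcases le_or_gt (dH E) k with hdk | hdk
    · have hmax : max k (dH E) = k := max_eq_left hdk
      rw [hmax] at hS
      have h1 : degOn E S v * (k - 1) ≤ 1 * (k - 1) := by omega
      have h2 : degOn E S v ≤ 1 := Nat.le_of_mul_le_mul_right h1 (by omega)
      calc degOn E S v ≤ 1 := h2
        _ ≤ k * dH E := Nat.one_le_iff_ne_zero.mpr (by positivity)
    · have hmax : max k (dH E) = dH E := max_eq_right hdk.le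
      rw [hmax] at hS
      have h2 : degOn E S v ≤ degOn E S v * (k - 1) :=
        Nat.le_mul_of_pos_right _ (by omega)
      have : degOn E S v ≤ dH E - 1 := by omega
      calc degOn E S v ≤ dH E := by omega
        _ ≤ k * dH E := Nat.le_mul_of_pos_left _ (by omega)

lemma key_exists {k : ℕ} {E : Finset (Finset (Fin m))} (hk : 2 ≤ k)
    (hunif : ∀ e ∈ E, e.card = k)
    (hlin : ∀ e ∈ E, ∀ f ∈ E, e ≠ f → (e ∩ f).card ≤ 1)
    (U R : Finset (Fin m)) (hRU : R ⊆ U) (hR : R.card ≤ max k (dH E))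
    (hT : (U \ R).Nonempty) :
    ∃ v ∈ U \ R, degOn E U v ≤ k * dH E := by
  classical
  by_contra hcon
  push_neg at hcon
  set T := U \ R with hTdef
  set d := dH E with hd
  -- d ≥ 1
  have hd1 : 1 ≤ d := by
    obtain ⟨v, hv⟩ := hT
    have h1 : 1 ≤ degOn E U v := by have := hcon v hv; omega
    obtain ⟨e, he⟩ := Finset.card_pos.mp h1
    simp only [Finset.mem_filter] at he
    exact one_le_dH he.1 (Finset.card_pos.mp (by rw [hunif e he.1]; omega))
  obtain ⟨v0, hv0T, hv0d⟩ := exists_low_deg E T hT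
  have hv0R : v0 ∉ R := (Finset.mem_sdiff.mp hv0T).2
  have hsplit := degOn_le_sdiff_add hlin U R v0 hv0R
  rw [← hTdef] at hsplit
  rcases le_or_gt d k with hdk | hdk
  · -- d ≤ k
    have hRk : R.card ≤ k := hR.trans_eq (max_eq_left hdk)
    rcases Nat.lt_or_ge d 2 with hd2 | hd2
    · -- d = 1 : the hard case
      have hdeq : d = 1 := by omega
      have hTall : ∀ v ∈ T, k + 1 ≤ degOn E U v := by
        intro v hv
        have h := hcon v hv
        rw [hdeq, mul_one] at h
        omega
      have hT1 : ∀ v ∈ T, 1 ≤ degOn E T v := by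
        intro v hv
        have h1 := degOn_le_sdiff_add hlin U R v (Finset.mem_sdiff.mp hv).2
        have h2 := hTall v hv
        rw [← hTdef] at h1
        omega
      -- k ≤ U.card
      have hkU : k ≤ U.card := by
        obtain ⟨v, hv⟩ := hT
        have h1 : 1 ≤ degOn E U v := by have := hTall v hv; omega
        obtain ⟨e, he⟩ := Finset.card_pos.mp h1
        simp only [Finset.mem_filter] at he
        rw [← hunif e he.1]
        exact Finset.card_le_card he.2.2
      have hUcard : U.card ≤ T.card + k := by
        have := Finset.card_sdiff_add_card_eq_card hRU
        rw [← hTdef] at this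
        omega
      -- T.card ≤ k
      have hecard := edges_card_le k (by omega) E hunif U
      rw [← hd, hdeq, one_mul] at hecard
      have hsum : T.card * (k + 1) ≤ ∑ v ∈ U, degOn E U v := by
        calc T.card * (k+1) = ∑ _v ∈ T, (k+1) := by rw [Finset.sum_const, smul_eq_mul]
          _ ≤ ∑ v ∈ T, degOn E U v := Finset.sum_le_sum hTall
          _ ≤ ∑ v ∈ U, degOn E U v := Finset.sum_le_sum_of_subset (Finset.sdiff_subset)
      rw [sum_degOn hunif U] at hsum
      have hTk : T.card ≤ k := by
        have h1 : k * (E.filter (fun e => e ⊆ U)).card ≤ k * (T.card + 1) := by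
          apply Nat.mul_le_mul_left
          omega
        have h2 : T.card * (k+1) = T.card * k + T.card := by ring
        have h3 : k * (T.card + 1) = T.card * k + k := by ring
        omega
      -- T is an edge
      obtain ⟨e1, he1⟩ := Finset.card_pos.mp (hT1 v0 hv0T)
      simp only [Finset.mem_filter] at he1
      have hTE : T = e1 := by
        apply (Finset.eq_of_subset_of_card_le he1.2.2 ?_).symm
        rw [hunif e1 he1.1]
        exact hTk
      have hTcard : T.card = k := by rw [hTE, hunif e1 he1.1]
      have hTmem : T ∈ E := hTE ▸ he1.1
      -- every vertex of T has degOn E T v = 1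
      have hdeg1 : ∀ v ∈ T, degOn E T v = 1 := by
        intro v hv
        have : E.filter (fun e => v ∈ e ∧ e ⊆ T) = {T} := by
          apply Finset.Subset.antisymm
          · intro e he
            simp only [Finset.mem_filter] at he
            rw [Finset.mem_singleton]
            apply (Finset.eq_of_subset_of_card_le he.2.2 ?_)
            rw [hunif e he.1]; exact hTcard.le
          · intro e he
            rw [Finset.mem_singleton] at he
            subst he
            simp only [Finset.mem_filter]
            exact ⟨hTmem, hv, Finset.Subset.refl _⟩
        unfold degOn
        rw [this, Finset.card_singleton]
      -- each v ∈ T has at least k edges meeting R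
      set G := fun v => E.filter (fun e => v ∈ e ∧ e ⊆ U ∧ (e ∩ R).Nonempty) with hG
      have hGcard : ∀ v ∈ T, k ≤ (G v).card := by
        intro v hv
        have hsub : E.filter (fun e => v ∈ e ∧ e ⊆ U)
            ⊆ E.filter (fun e => v ∈ e ∧ e ⊆ T) ∪ G v := by
          intro e he
          simp only [Finset.mem_filter] at he
          rcases Finset.eq_empty_or_nonempty (e ∩ R) with hER | hER
          · apply Finset.mem_union_left
            simp only [Finset.mem_filter]
            refine ⟨he.1, he.2.1, fun x hx => Finset.mem_sdiff.mpr ⟨he.2.2 hx, fun hxR => ?_⟩⟩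
            exact Finset.notMem_empty x (hER ▸ Finset.mem_inter.mpr ⟨hx, hxR⟩)
          · exact Finset.mem_union_right _ (by simp only [hG, Finset.mem_filter]; tauto)
        have h1 := (Finset.card_le_card hsub).trans (Finset.card_union_le _ _)
        have h2 := hTall v hv
        have h3 := hdeg1 v hv
        unfold degOn at h2 h3
        omega
      -- the G v are pairwise disjoint
      have hGdisj : ∀ v ∈ T, ∀ u ∈ T, v ≠ u → Disjoint (G v) (G u) := by
        intro v hv u hu hvu
        rw [Finset.disjoint_left]
        intro e hev heu
        simp only [hG, Finset.mem_filter] at hev heu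
        have heT : e ≠ T := by
          intro h
          obtain ⟨x, hx⟩ := hev.2.2.2
          rw [h] at hx
          have := Finset.mem_inter.mp hx
          exact (Finset.mem_sdiff.mp (hTdef ▸ this.1)).2 this.2
        have h1 : (e ∩ T).card ≤ 1 := hlin e hev.1 T hTmem heT
        have h2 : ({v, u} : Finset (Fin m)) ⊆ e ∩ T := by
          intro x hx
          rcases Finset.mem_insert.mp hx with rfl | hx
          · exact Finset.mem_inter.mpr ⟨hev.2.1, hv⟩
          · rw [Finset.mem_singleton] at hx; subst hx
            exact Finset.mem_inter.mpr ⟨heu.2.1, hu⟩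
        have := Finset.card_le_card h2
        rw [Finset.card_pair hvu] at this
        omega
      -- count edges inside U
      set B := T.biUnion G with hB
      have hTB : T ∉ B := by
        intro h
        rw [hB, Finset.mem_biUnion] at h
        obtain ⟨v, hv, hTv⟩ := h
        simp only [hG, Finset.mem_filter] at hTv
        obtain ⟨x, hx⟩ := hTv.2.2.2
        have := Finset.mem_inter.mp hx
        exact (Finset.mem_sdiff.mp (hTdef ▸ this.1)).2 this.2
      have hBsub : insert T B ⊆ E.filter (fun e => e ⊆ U) := by
        intro e he
        rcases Finset.mem_insert.mp he with rfl | he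
        · simp only [Finset.mem_filter]
          exact ⟨hTmem, hTdef ▸ Finset.sdiff_subset⟩
        · rw [hB, Finset.mem_biUnion] at he
          obtain ⟨v, hv, hev⟩ := he
          simp only [hG, Finset.mem_filter] at hev
          simp only [Finset.mem_filter]
          exact ⟨hev.1, hev.2.2.1⟩
      have hBcard : k * k + 1 ≤ (insert T B).card := by
        rw [Finset.card_insert_of_notMem hTB, hB, Finset.card_biUnion hGdisj]
        have : T.card * k ≤ ∑ v ∈ T, (G v).card := by
          calc T.card * k = ∑ _v ∈ T, k := by rw [Finset.sum_const, smul_eq_mul]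
            _ ≤ ∑ v ∈ T, (G v).card := Finset.sum_le_sum hGcard
        rw [hTcard] at this
        omega
      have hfin : (insert T B).card ≤ k + 1 := by
        calc (insert T B).card ≤ (E.filter (fun e => e ⊆ U)).card := Finset.card_le_card hBsub
          _ ≤ U.card + 1 - k := hecard
          _ ≤ k + 1 := by omega
      have : k * k ≤ k * 1 := by omega
      have := Nat.le_of_mul_le_mul_left this (by omega)
      omega
    · -- 2 ≤ d ≤ k
      have h1 := hcon v0 hv0T
      have h2 : k * d ≥ d + k := by
        have : k * d ≥ k * 2 := Nat.mul_le_mul_left k hd2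
        omega
      omega
  · -- k < d
    have hRd : R.card ≤ d := hR.trans_eq (max_eq_right hdk.le)
    have h1 := hcon v0 hv0T
    have h2 : 2 * d ≤ k * d := Nat.mul_le_mul_right d hk
    omega

lemma build_tail {k : ℕ} {E : Finset (Finset (Fin m))} (hk : 2 ≤ k)
    (hunif : ∀ e ∈ E, e.card = k)
    (hlin : ∀ e ∈ E, ∀ f ∈ E, e ≠ f → (e ∩ f).card ≤ 1)
    (Wimg : Finset (Fin m)) (hWcard : Wimg.card ≤ max k (dH E)) :
    ∀ n (U : Finset (Fin m)), U.card = n → Wimg ⊆ U →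
    ∃ L : List (Fin m), L.Nodup ∧ L.toFinset = U \ Wimg ∧
      ∀ i (hi : i < L.length),
        degOn E (Wimg ∪ (L.take (i+1)).toFinset) (L.get ⟨i, hi⟩) ≤ DH k E := by
  intro n
  induction n with
  | zero =>
    intro U hU hWU
    refine ⟨[], List.nodup_nil, ?_, fun i hi => absurd hi (by simp)⟩
    rw [Finset.card_eq_zero] at hU
    subst hU
    simp [Finset.subset_empty.mp hWU]
  | succ n ih =>
    intro U hU hWU
    by_cases hUW : U \ Wimg = ∅
    · refine ⟨[], List.nodup_nil, by simp [hUW], fun i hi => absurd hi (by simp)⟩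
    · have hTne : (U \ Wimg).Nonempty := Finset.nonempty_of_ne_empty hUW
      obtain ⟨v, hvT, hvdeg⟩ := key_exists hk hunif hlin U Wimg hWU hWcard hTne
      have hvU : v ∈ U := (Finset.mem_sdiff.mp hvT).1
      have hvW : v ∉ Wimg := (Finset.mem_sdiff.mp hvT).2
      obtain ⟨L', hnd, htf, hdeg⟩ := ih (U.erase v)
        (by rw [Finset.card_erase_of_mem hvU, hU]; rfl)
        (fun x hx => Finset.mem_erase.mpr ⟨fun h => hvW (h ▸ hx), hWU hx⟩)
      have hvL' : v ∉ L' := by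
        intro h
        have : v ∈ L'.toFinset := List.mem_toFinset.mpr h
        rw [htf] at this
        exact Finset.notMem_erase v U (Finset.mem_sdiff.mp this).1
      refine ⟨L' ++ [v], ?_, ?_, ?_⟩
      · rw [List.nodup_append']
        exact ⟨hnd, List.nodup_singleton v, by simpa using hvL'⟩
      · rw [List.toFinset_append, htf]
        ext x
        simp only [Finset.mem_union, Finset.mem_sdiff, Finset.mem_erase, List.toFinset_cons,
          List.toFinset_nil, LawfulSingleton.insert_empty_eq, Finset.mem_singleton]
        constructor
        · rintro (⟨⟨hxv, hxU⟩, hxW⟩ | rfl)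
          · exact ⟨hxU, hxW⟩
          · exact ⟨hvU, hvW⟩
        · rintro ⟨hxU, hxW⟩
          by_cases hxveq : x = v
          · right; exact hxveq
          · left; exact ⟨⟨hxveq, hxU⟩, hxW⟩
      · intro i hi
        rw [List.length_append, List.length_singleton] at hi
        rcases Nat.lt_or_ge i L'.length with hiL | hiL
        · have htake : (L' ++ [v]).take (i+1) = L'.take (i+1) := by
            rw [List.take_append, Nat.sub_eq_zero_of_le (by omega),
              List.take_zero, List.append_nil]
          rw [htake]
          convert hdeg i hiL using 2
          exact List.getElem_append_left hiL
        · have hieq : i = L'.length := by omega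
          subst hieq
          have htake : (L' ++ [v]).take (L'.length + 1) = L' ++ [v] := by
            apply List.take_of_length_le
            simp
          have hget : (L' ++ [v]).get ⟨L'.length, by simp⟩ = v := by
            simp [List.get_eq_getElem]
          rw [htake, hget]
          have hset : Wimg ∪ (L' ++ [v]).toFinset = U := by
            rw [List.toFinset_append, htf]
            ext x
            simp only [Finset.mem_union, Finset.mem_sdiff, Finset.mem_erase, List.toFinset_cons,
              List.toFinset_nil, LawfulSingleton.insert_empty_eq, Finset.mem_singleton]
            constructor
            · rintro (hxW | ⟨⟨_, hxU⟩, _⟩ | rfl)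
              · exact hWU hxW
              · exact hxU
              · exact hvU
            · intro hxU
              by_cases hxW : x ∈ Wimg
              · left; exact hxW
              · by_cases hxv : x = v
                · right; right; exact hxv
                · right; left; exact ⟨⟨hxv, hxU⟩, hxW⟩
          rw [hset]
          exact le_min hvdeg (degOn_le_maxDeg E U v)

end Aux

/-- Any sequence `W` of at most `max{k, d_H}` distinct vertices of a linear `k`-uniform
hypergraph can be extended to a `D_H`-degenerate ordering of the vertices beginning with `W`. -/
theorem stmt3 (k m ℓ : ℕ) (hk : 2 ≤ k)
    (E : Finset (Finset (Fin m))) (hunif : ∀ e ∈ E, e.card = k)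
    (hlin : ∀ e ∈ E, ∀ f ∈ E, e ≠ f → (e ∩ f).card ≤ 1)
    (hℓ : ℓ ≤ max k (dH E)) (W : Fin ℓ → Fin m) (hW : Function.Injective W) :
    ∃ σ : Equiv.Perm (Fin m),
      (∀ (i : ℕ) (hi : i < ℓ) (hi' : i < m), σ ⟨i, hi'⟩ = W ⟨i, hi⟩) ∧
      ∀ i : Fin m,
        (E.filter (fun e => σ i ∈ e ∧ ∀ x ∈ e, (σ.symm x : ℕ) ≤ (i : ℕ))).card ≤ DH k E := by
  classical
  set Wimg : Finset (Fin m) := Finset.univ.image W with hWimg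
  have hWimgcard : Wimg.card = ℓ := by
    rw [hWimg, Finset.card_image_of_injective _ hW, Finset.card_univ, Fintype.card_fin]
  have hℓm : ℓ ≤ m := by
    have := Finset.card_le_card (Finset.subset_univ Wimg)
    rwa [hWimgcard, Finset.card_univ, Fintype.card_fin] at this
  obtain ⟨L, hnd, htf, hdeg⟩ := build_tail hk hunif hlin Wimg (hWimgcard ▸ hℓ)
    (Finset.univ : Finset (Fin m)).card Finset.univ rfl (Finset.subset_univ _)
  have hLWnd : (List.ofFn W).Nodup := by rw [List.nodup_ofFn]; exact hW
  have hLWtf : (List.ofFn W).toFinset = Wimg := by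
    ext x
    simp [hWimg, List.mem_ofFn, eq_comm]
  have hLlen : L.length = m - ℓ := by
    have h1 := List.toFinset_card_of_nodup hnd
    rw [htf, Finset.card_sdiff_of_subset (Finset.subset_univ _), Finset.card_univ, Fintype.card_fin,
      hWimgcard] at h1
    omega
  have hLWlen : (List.ofFn W).length = ℓ := List.length_ofFn
  have hfulllen : (List.ofFn W ++ L).length = m := by
    rw [List.length_append, hLWlen, hLlen]
    omega
  have hfullnd : (List.ofFn W ++ L).Nodup := by
    rw [List.nodup_append']
    refine ⟨hLWnd, hnd, fun x hx hx' => ?_⟩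
    have h1 : x ∈ Wimg := hLWtf ▸ List.mem_toFinset.mpr hx
    have h2 : x ∈ Finset.univ \ Wimg := htf ▸ List.mem_toFinset.mpr hx'
    exact (Finset.mem_sdiff.mp h2).2 h1
  have hgetinj : Function.Injective
      (fun i : Fin m => (List.ofFn W ++ L).get (Fin.cast hfulllen.symm i)) := by
    intro a b hab
    have h2 := (List.nodup_iff_injective_get).mp hfullnd hab
    have h3 := congrArg Fin.val h2
    exact Fin.val_injective h3
  have hbij := Finite.injective_iff_bijective.mp hgetinj
  set σ : Equiv.Perm (Fin m) := Equiv.ofBijective _ hbij with hσ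
  have hσapp : ∀ i : Fin m,
      σ i = (List.ofFn W ++ L).get (Fin.cast hfulllen.symm i) := fun i => rfl
  refine ⟨σ, ?_, ?_⟩
  · intro i hi hi'
    rw [hσapp]
    simp only [List.get_eq_getElem, Fin.coe_cast]
    have h1 : i < (List.ofFn W).length := by rw [hLWlen]; omega
    rw [List.getElem_append_left h1, List.getElem_ofFn]
  · intro i
    set P : Finset (Fin m) := ((List.ofFn W ++ L).take ((i : ℕ)+1)).toFinset with hP
    have hkey : ∀ x : Fin m, ((σ.symm x : ℕ) ≤ (i : ℕ)) ↔ x ∈ P := by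
      intro x
      constructor
      · intro hle
        have hx : σ (σ.symm x) = x := σ.apply_symm_apply x
        rw [hσapp] at hx
        have hj : ((σ.symm x : ℕ)) < ((List.ofFn W ++ L).take ((i:ℕ)+1)).length := by
          rw [List.length_take, hfulllen]
          have := (σ.symm x).isLt
          omega
        rw [hP]
        apply List.mem_toFinset.mpr
        have h3 : ((List.ofFn W ++ L).take ((i:ℕ)+1))[(σ.symm x : ℕ)] = x := by
          rw [List.getElem_take]
          exact hx
        exact h3 ▸ List.getElem_mem hj
      · intro hmem
        rw [hP] at hmem
        have hmem' := List.mem_toFinset.mp hmem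
        obtain ⟨j, hj, hjx⟩ := List.mem_iff_getElem.mp hmem'
        have hjlen : j < m := by
          rw [List.length_take, hfulllen] at hj
          omega
        have hjle : j ≤ (i : ℕ) := by
          rw [List.length_take, hfulllen] at hj
          omega
        rw [List.getElem_take] at hjx
        have h4 : σ ⟨j, hjlen⟩ = x := by
          rw [hσapp]
          exact hjx
        rw [← h4, Equiv.symm_apply_apply]
        exact hjle
    have hfilter : E.filter (fun e => σ i ∈ e ∧ ∀ x ∈ e, (σ.symm x : ℕ) ≤ (i : ℕ))
        = E.filter (fun e => σ i ∈ e ∧ e ⊆ P) := by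
      apply Finset.filter_congr
      intro e _
      constructor
      · rintro ⟨h1, h2⟩
        exact ⟨h1, fun x hx => (hkey x).mp (h2 x hx)⟩
      · rintro ⟨h1, h2⟩
        exact ⟨h1, fun x hx => (hkey x).mpr (h2 hx)⟩
    rw [hfilter]
    have hdegOn : (E.filter (fun e => σ i ∈ e ∧ e ⊆ P)).card = degOn E P (σ i) := rfl
    rw [hdegOn]
    rcases Nat.lt_or_ge (i : ℕ) ℓ with hiℓ | hiℓ
    · have hPcard : P.card ≤ max k (dH E) := by
        calc P.card ≤ ((List.ofFn W ++ L).take ((i:ℕ)+1)).length := List.toFinset_card_le _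
          _ = min ((i:ℕ)+1) m := by rw [List.length_take, hfulllen]
          _ ≤ ℓ := by omega
          _ ≤ max k (dH E) := hℓ
      exact le_min (prefix_bound hk hunif hlin P (σ i) hPcard) (degOn_le_maxDeg E P (σ i))
    · have hjlt : (i : ℕ) - ℓ < L.length := by
        have := i.isLt
        omega
      have htake : (List.ofFn W ++ L).take ((i:ℕ)+1)
          = List.ofFn W ++ L.take ((i:ℕ) - ℓ + 1) := by
        rw [List.take_append, List.take_of_length_le (by omega), hLWlen]
        congr 2
        omega
      have hPU : P = Wimg ∪ (L.take ((i:ℕ) - ℓ + 1)).toFinset := by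
        rw [hP, htake, List.toFinset_append, hLWtf]
      have hget : σ i = L.get ⟨(i:ℕ) - ℓ, hjlt⟩ := by
        rw [hσapp]
        simp only [List.get_eq_getElem, Fin.coe_cast]
        rw [List.getElem_append_right (by omega)]
        congr 1
        rw [hLWlen]
      rw [hPU, hget]
      exact hdeg ((i:ℕ) - ℓ) hjlt
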